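/- Define on J(3,ℍ) ⊕ ℍ³ the product (M + a) × (N + b) = (M × N − (1/2)(aᴴb + bᴴa)) − (1/2)(aN + bM), where a, b are row vectors, aᴴb denotes the 3×3 matrix a* b formed from the column a* and row b, and M × N is the Freudenthal product. For A ∈ Sp(3), the map φ(A)(M + a) = AMAᴴ + aAᴴ preserves this product: φ(A)((M+a)×(N+b)) = φ(A)(M+a) × φ(A)(N+b). -/

import Mathlib

noncomputable section
open Matrix

abbrev ℍ := Quaternion ℝ

def jmul (X Y : Matrix (Fin 3) (Fin 3) ℍ) : Matrix (Fin 3) (Fin 3) ℍ :=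
  (1/2 : ℝ) • (X * Y + Y * X)

def inn (X Y : Matrix (Fin 3) (Fin 3) ℍ) : ℍ :=
  Matrix.trace (jmul X Y)

/-- the Freudenthal product on `J(3,ℍ)`. -/
def fmul (X Y : Matrix (Fin 3) (Fin 3) ℍ) : Matrix (Fin 3) (Fin 3) ℍ :=
  (1/2 : ℝ) • ((2:ℝ) • jmul X Y - Matrix.trace X • Y - Matrix.trace Y • X
    + (Matrix.trace X * Matrix.trace Y - inn X Y) • (1 : Matrix (Fin 3) (Fin 3) ℍ))

/-- matrix part of the cross product on `J(3,ℍ) ⊕ ℍ³`: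
`M × N − (1/2)(aᴴb + bᴴa)`. -/
def crossMat (M N : Matrix (Fin 3) (Fin 3) ℍ) (a b : Fin 3 → ℍ) :
    Matrix (Fin 3) (Fin 3) ℍ :=
  fmul M N - (1/2 : ℝ) • (Matrix.of fun i j => star (a i) * b j + star (b i) * a j)

/-- vector part of the cross product on `J(3,ℍ) ⊕ ℍ³`: `−(1/2)(aN + bM)`. -/
def crossVec (M N : Matrix (Fin 3) (Fin 3) ℍ) (a b : Fin 3 → ℍ) : Fin 3 → ℍ :=
  -((1/2 : ℝ) • (Matrix.vecMul a N + Matrix.vecMul b M))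

/-! ### Auxiliary lemmas -/

/-- `mulVec` as an `ℝ`-linear map. -/
def mv (X : Matrix (Fin 3) (Fin 3) ℍ) : (Fin 3 → ℍ) →ₗ[ℝ] (Fin 3 → ℍ) where
  toFun v := X.mulVec v
  map_add' x y := Matrix.mulVec_add X x y
  map_smul' r v := by
    funext i
    simp only [Matrix.mulVec, dotProduct, RingHom.id_apply, Pi.smul_apply,
      Finset.smul_sum, mul_smul_comm]

lemma mv_mul (X Y : Matrix (Fin 3) (Fin 3) ℍ) : mv (X * Y) = mv X * mv Y := by
  refine LinearMap.ext fun v => ?_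
  show (X * Y).mulVec v = X.mulVec (Y.mulVec v)
  rw [Matrix.mulVec_mulVec]

lemma mv_one : mv 1 = 1 := by
  refine LinearMap.ext fun v => ?_
  show (1 : Matrix (Fin 3) (Fin 3) ℍ).mulVec v = v
  rw [Matrix.one_mulVec]

lemma mul_conjT_eq_one {A : Matrix (Fin 3) (Fin 3) ℍ} (hA : Aᴴ * A = 1) : A * Aᴴ = 1 := by
  have h1 : mv Aᴴ * mv A = 1 := by rw [← mv_mul, hA, mv_one]
  have h2 : mv A * mv Aᴴ = 1 := mul_eq_one_comm.2 h1
  rw [← mv_mul, ← mv_one] at h2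
  refine Matrix.ext fun i j => ?_
  have h3 := congrFun (LinearMap.congr_fun h2 (Pi.single j 1)) i
  simpa [mv, Matrix.mulVec_single, Matrix.one_mulVec, Matrix.one_apply,
    Pi.single_apply, eq_comm] using h3

def reh : ℍ →+ ℝ where
  toFun := QuaternionAlgebra.re
  map_zero' := rfl
  map_add' _ _ := rfl

lemma re_trace_mul_comm (X Y : Matrix (Fin 3) (Fin 3) ℍ) :
    (Matrix.trace (X * Y)).re = (Matrix.trace (Y * X)).re := by
  show reh (Matrix.trace (X * Y)) = reh (Matrix.trace (Y * X))
  simp only [Matrix.trace, Matrix.diag, Matrix.mul_apply, map_sum]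
  rw [Finset.sum_comm]
  refine Finset.sum_congr rfl fun i _ => Finset.sum_congr rfl fun j _ => ?_
  show (X j i * Y i j).re = (Y i j * X j i).re
  simp only [Quaternion.re_mul]; ring

lemma isReal {q : ℍ} (h : star q = q) : q = ((q.re : ℝ) : ℍ) := by
  apply Quaternion.ext <;>
    simp_all [Quaternion.ext_iff, neg_eq_iff_add_eq_zero, eq_comm (a := (0:ℝ))]

lemma trace_conj {A H : Matrix (Fin 3) (Fin 3) ℍ} (hA : Aᴴ * A = 1) (hH : Hᴴ = H) :
    Matrix.trace (A * H * Aᴴ) = Matrix.trace H := by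
  have h1 : (A * H * Aᴴ)ᴴ = A * H * Aᴴ := by
    simp [Matrix.conjTranspose_mul, hH, Matrix.mul_assoc]
  have h2 : star (Matrix.trace (A * H * Aᴴ)) = Matrix.trace (A * H * Aᴴ) := by
    rw [← Matrix.trace_conjTranspose, h1]
  have h3 : star (Matrix.trace H) = Matrix.trace H := by
    rw [← Matrix.trace_conjTranspose, hH]
  rw [isReal h2, isReal h3]
  have h4 := re_trace_mul_comm (A * H) Aᴴ
  rw [← Matrix.mul_assoc, hA, Matrix.one_mul] at h4
  exact congrArg (fun r : ℝ => (r : ℍ)) h4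

lemma real_smul {q : ℍ} (h : star q = q) (X : Matrix (Fin 3) (Fin 3) ℍ) :
    q • X = q.re • X := by
  nth_rewrite 1 [isReal h]
  refine Matrix.ext fun i j => ?_
  show ((q.re : ℝ) : ℍ) * X i j = q.re • X i j
  exact Quaternion.coe_mul_eq_smul _ _

lemma fmul_conj {A M N : Matrix (Fin 3) (Fin 3) ℍ} (hA : Aᴴ * A = 1) (hA' : A * Aᴴ = 1)
    (hM : Mᴴ = M) (hN : Nᴴ = N) :
    A * fmul M N * Aᴴ = fmul (A * M * Aᴴ) (A * N * Aᴴ) := by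
  have hMN : (M * N + N * M)ᴴ = M * N + N * M := by
    simp [Matrix.conjTranspose_mul, hM, hN, add_comm]
  have hjm : (A * M * Aᴴ) * (A * N * Aᴴ) = A * (M * N) * Aᴴ := by
    simp only [Matrix.mul_assoc]
    rw [← Matrix.mul_assoc Aᴴ A, hA, Matrix.one_mul]
  have hjm' : (A * N * Aᴴ) * (A * M * Aᴴ) = A * (N * M) * Aᴴ := by
    simp only [Matrix.mul_assoc]
    rw [← Matrix.mul_assoc Aᴴ A, hA, Matrix.one_mul]
  have htM : Matrix.trace (A * M * Aᴴ) = Matrix.trace M := trace_conj hA hM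
  have htN : Matrix.trace (A * N * Aᴴ) = Matrix.trace N := trace_conj hA hN
  have hj : jmul (A * M * Aᴴ) (A * N * Aᴴ) = A * jmul M N * Aᴴ := by
    unfold jmul
    rw [hjm, hjm']
    simp only [Matrix.mul_smul, Matrix.smul_mul, Matrix.mul_add, Matrix.add_mul,
      Matrix.mul_assoc]
  have hinn : inn (A * M * Aᴴ) (A * N * Aᴴ) = inn M N := by
    unfold inn jmul
    rw [hjm, hjm', Matrix.trace_smul, Matrix.trace_smul, Matrix.trace_add, Matrix.trace_add]
    have h5 := trace_conj hA hMN
    rw [Matrix.mul_add, Matrix.add_mul, Matrix.trace_add] at h5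
    rw [h5, Matrix.trace_add]
  have hsM : star (Matrix.trace M) = Matrix.trace M := by
    rw [← Matrix.trace_conjTranspose, hM]
  have hsN : star (Matrix.trace N) = Matrix.trace N := by
    rw [← Matrix.trace_conjTranspose, hN]
  have hsI : star (inn M N) = inn M N := by
    unfold inn jmul
    rw [Matrix.trace_smul, Quaternion.star_smul, ← Matrix.trace_conjTranspose, hMN]
  have hcomm : Matrix.trace N * Matrix.trace M = Matrix.trace M * Matrix.trace N := by
    rw [isReal hsM]
    exact (Quaternion.coe_commutes _ _).symm
  have hsC : star (Matrix.trace M * Matrix.trace N - inn M N)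
      = Matrix.trace M * Matrix.trace N - inn M N := by
    rw [star_sub, StarMul.star_mul, hsM, hsN, hsI, hcomm]
  unfold fmul
  rw [htM, htN, hinn, hj]
  rw [real_smul hsM N, real_smul hsN M, real_smul hsC, real_smul hsM (A*N*Aᴴ),
    real_smul hsN (A*M*Aᴴ)]
  simp only [Matrix.mul_smul, Matrix.smul_mul, Matrix.mul_sub, Matrix.sub_mul,
    Matrix.mul_add, Matrix.add_mul, Matrix.mul_one, Matrix.one_mul, Matrix.mul_assoc, hA']

lemma K_conj {A : Matrix (Fin 3) (Fin 3) ℍ} (a b : Fin 3 → ℍ) :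
    A * (Matrix.of fun i j => star (a i) * b j + star (b i) * a j) * Aᴴ
      = Matrix.of (fun i j => star (Matrix.vecMul a Aᴴ i) * (Matrix.vecMul b Aᴴ) j
          + star (Matrix.vecMul b Aᴴ i) * (Matrix.vecMul a Aᴴ) j) := by
  refine Matrix.ext fun i j => ?_
  simp only [Matrix.mul_apply, Matrix.of_apply, Matrix.conjTranspose_apply,
    Matrix.vecMul, dotProduct, star_sum, StarMul.star_mul, star_star,
    Finset.sum_mul, Finset.mul_sum, mul_add, add_mul]
  rw [← Finset.sum_add_distrib]
  refine Finset.sum_congr rfl fun k _ => ?_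
  rw [← Finset.sum_add_distrib]
  refine Finset.sum_congr rfl fun l _ => ?_
  noncomm_ring

theorem phi_preserves_cross (A M N : Matrix (Fin 3) (Fin 3) ℍ) (a b : Fin 3 → ℍ)
    (hA : Aᴴ * A = 1) (hM : Mᴴ = M) (hN : Nᴴ = N) :
    A * crossMat M N a b * Aᴴ
        = crossMat (A * M * Aᴴ) (A * N * Aᴴ) (Matrix.vecMul a Aᴴ) (Matrix.vecMul b Aᴴ) ∧
    Matrix.vecMul (crossVec M N a b) Aᴴ
        = crossVec (A * M * Aᴴ) (A * N * Aᴴ) (Matrix.vecMul a Aᴴ) (Matrix.vecMul b Aᴴ) := by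
  have hA' : A * Aᴴ = 1 := mul_conjT_eq_one hA
  constructor
  · unfold crossMat
    rw [Matrix.mul_sub, Matrix.sub_mul, fmul_conj hA hA' hM hN,
      Matrix.mul_smul, Matrix.smul_mul, K_conj]
  · unfold crossVec
    have hcN : Aᴴ * (A * N * Aᴴ) = N * Aᴴ := by
      rw [← Matrix.mul_assoc, ← Matrix.mul_assoc, hA, Matrix.one_mul]
    have hcM : Aᴴ * (A * M * Aᴴ) = M * Aᴴ := by
      rw [← Matrix.mul_assoc, ← Matrix.mul_assoc, hA, Matrix.one_mul]
    rw [Matrix.neg_vecMul, Matrix.smul_vecMul, Matrix.add_vecMul,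
      Matrix.vecMul_vecMul, Matrix.vecMul_vecMul, Matrix.vecMul_vecMul,
      Matrix.vecMul_vecMul, hcN, hcM]
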